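/- Let F be a finite field with q elements and α ≤ β. Let R be an α×β matrix and S an α×γ matrix over F such that the α×(β+γ) block matrix (R S) has rank α. Then the probability that a uniformly random γ×β matrix Z over F satisfies rank(R + SZ) = α is strictly greater than 1 − q^α/(q^β(q−1)). -/

import Mathlib

open Matrix Finset

/-- A matrix with `a` rows has rank `a` iff its rows are "independent" in the
sense that no nonzero vector kills it from the left. -/
private lemma aux_rank_iff {F : Type*} [Field F] {a : ℕ} {n : Type*} [Fintype n]
    (M : Matrix (Fin a) n F) :
    M.rank = a ↔ ∀ v : Fin a → F, v ᵥ* M = 0 → v = 0 := by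
  classical
  rw [← Matrix.rank_transpose]
  have hdef : Mᵀ.rank = Module.finrank F (LinearMap.range Mᵀ.mulVecLin) := rfl
  have hrn := LinearMap.finrank_range_add_finrank_ker (Mᵀ.mulVecLin)
  have hdom : Module.finrank F (Fin a → F) = a := by simp
  rw [hdom] at hrn
  constructor
  · intro h v hv
    have hker0 : Module.finrank F (LinearMap.ker Mᵀ.mulVecLin) = 0 := by
      rw [hdef] at h; omega
    have hker : LinearMap.ker Mᵀ.mulVecLin = ⊥ :=
      (Submodule.finrank_eq_zero (R := F)).mp hker0
    have hmem : v ∈ LinearMap.ker Mᵀ.mulVecLin := by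
      rw [LinearMap.mem_ker, Matrix.mulVecLin_apply, Matrix.mulVec_transpose, hv]
    rw [hker] at hmem
    simpa using hmem
  · intro h
    have hker : LinearMap.ker Mᵀ.mulVecLin = ⊥ := by
      rw [LinearMap.ker_eq_bot']
      intro v hv
      exact h v (by rw [← Matrix.mulVec_transpose]; exact hv)
    have : Module.finrank F (LinearMap.ker Mᵀ.mulVecLin) = 0 := by rw [hker]; simp
    rw [hdef]; omega

/-- Fibers of a surjective additive hom between finite groups have cardinality
`card M / card N`. -/
private lemma aux_card_fiber {M N : Type*} [AddCommGroup M] [AddCommGroup N]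
    [Fintype M] [Fintype N] [DecidableEq N] (f : M →+ N)
    (hf : Function.Surjective f) (t : N) :
    Nat.card {x : M // f x = t} * Fintype.card N = Fintype.card M := by
  classical
  obtain ⟨z, hz⟩ := hf t
  have e1 : {x : M // f x = t} ≃ f.ker :=
    { toFun := fun x => ⟨x.1 - z, by
        simp [AddMonoidHom.mem_ker, map_sub, x.2, hz]⟩
      invFun := fun y => ⟨y.1 + z, by
        have hy : f y.1 = 0 := AddMonoidHom.mem_ker.mp y.2
        simp [map_add, hy, hz]⟩
      left_inv := fun x => by simp
      right_inv := fun y => by simp }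
  have e2 : (M ⧸ f.ker) ≃ N := (QuotientAddGroup.quotientKerEquivOfSurjective f hf).toEquiv
  have h2 := AddSubgroup.card_eq_card_quotient_mul_card_addSubgroup f.ker
  calc Nat.card {x : M // f x = t} * Fintype.card N
      = Nat.card f.ker * Nat.card (M ⧸ f.ker) := by
        rw [Nat.card_congr e1, ← Nat.card_eq_fintype_card (α := N), ← Nat.card_congr e2]
    _ = Fintype.card M := by rw [mul_comm, ← h2, Nat.card_eq_fintype_card]

theorem stmt_2 {F : Type*} [Field F] [Fintype F] [DecidableEq F]
    (α β γ : ℕ) (hαβ : α ≤ β)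
    (R : Matrix (Fin α) (Fin β) F) (S : Matrix (Fin α) (Fin γ) F)
    (hrank : (Matrix.of (fun i => Sum.elim (R i) (S i)) :
        Matrix (Fin α) (Fin β ⊕ Fin γ) F).rank = α) :
    (1 : ℚ) - (Fintype.card F : ℚ) ^ α /
        ((Fintype.card F : ℚ) ^ β * ((Fintype.card F : ℚ) - 1)) <
      (Nat.card {Z : Matrix (Fin γ) (Fin β) F // (R + S * Z).rank = α} : ℚ) /
        (Nat.card (Matrix (Fin γ) (Fin β) F) : ℚ) := by
  classical
  set q := Fintype.card F with hq
  have hq2 : 2 ≤ q := Fintype.one_lt_card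
  set Ω := Matrix (Fin γ) (Fin β) F with hΩ
  set N := Fintype.card Ω with hN
  have hNpos : 0 < N := Fintype.card_pos
  -- the block matrix's rows are independent
  have hblock : ∀ v : Fin α → F,
      v ᵥ* R = 0 → v ᵥ* S = 0 → v = 0 := by
    intro v hr hs
    refine (aux_rank_iff _).mp hrank v ?_
    funext j
    cases j with
    | inl j =>
        have := congrFun hr j
        simpa [Matrix.vecMul, dotProduct] using this
    | inr j =>
        have := congrFun hs j
        simpa [Matrix.vecMul, dotProduct] using this
  -- bad set
  set bad : Finset Ω := Finset.univ.filter (fun Z => (R + S * Z).rank ≠ α) with hbad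
  set A : (Fin α → F) → Finset Ω :=
    fun v => Finset.univ.filter (fun Z => v ᵥ* (R + S * Z) = 0) with hA
  set nzv : Finset (Fin α → F) := Finset.univ.erase 0 with hnzv
  -- per-v bound
  have hper : ∀ v ∈ nzv, (A v).card * q ^ β ≤ N := by
    intro v hv
    have hv0 : v ≠ 0 := (Finset.mem_erase.mp hv).1
    set s : Fin γ → F := v ᵥ* S with hs
    set r : Fin β → F := v ᵥ* R with hr
    have hAv : A v = Finset.univ.filter (fun Z : Ω => s ᵥ* Z = -r) := by
      apply Finset.filter_congr
      intro Z _
      rw [Matrix.vecMul_add, ← Matrix.vecMul_vecMul, ← hr, ← hs]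
      constructor
      · intro h
        exact eq_neg_of_add_eq_zero_right h
      · intro h
        rw [h]
        simp
    by_cases hsz : s = 0
    · have hrne : r ≠ 0 := by
        intro hr0
        exact hv0 (hblock v hr0 hsz)
      have : A v = ∅ := by
        rw [hAv]
        apply Finset.filter_eq_empty_iff.mpr
        intro Z _
        rw [hsz, Matrix.zero_vecMul]
        intro h
        exact hrne (neg_eq_zero.mp h.symm)
      rw [this]
      simpa using Nat.zero_le N
    · -- s ≠ 0 : the map Z ↦ s ᵥ* Z is a surjective additive hom
      set f : Ω →+ (Fin β → F) :=
        { toFun := fun Z => s ᵥ* Z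
          map_zero' := by simp
          map_add' := fun X Y => Matrix.vecMul_add X Y s } with hf
      have hsurj : Function.Surjective f := by
        intro y
        obtain ⟨i, hi⟩ := Function.ne_iff.mp hsz
        refine ⟨Matrix.of (fun k j => if k = i then (s i)⁻¹ * y j else 0), ?_⟩
        funext j
        show (s ᵥ* _) j = y j
        have hi' : s i ≠ 0 := hi
        simp only [Matrix.vecMul, dotProduct, Matrix.of_apply, mul_ite, mul_zero]
        rw [Finset.sum_ite_eq' Finset.univ i (fun k => s k * ((s i)⁻¹ * y j))]
        simp [mul_inv_cancel_left₀ hi']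
      have hcard : (A v).card = Nat.card {Z : Ω // f Z = -r} := by
        rw [hAv, Nat.card_eq_fintype_card, Fintype.card_subtype]
        rfl
      have hfib := aux_card_fiber f hsurj (-r)
      have hcb : Fintype.card (Fin β → F) = q ^ β := by simp [hq]
      rw [hcard, ← hcb]
      exact le_of_eq (hfib.trans hN.symm)
  -- union bound with scaling: bad.card * (q - 1) ≤ ∑ v in nzv, (A v).card
  have hub : bad.card * (q - 1) ≤ ∑ v ∈ nzv, (A v).card := by
    rw [← Finset.card_sigma]
    have hwit : ∀ Z ∈ bad, ∃ v : Fin α → F, v ≠ 0 ∧ v ᵥ* (R + S * Z) = 0 := by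
      intro Z hZ
      have hne : (R + S * Z).rank ≠ α := (Finset.mem_filter.mp hZ).2
      have h2 : ¬ ∀ v : Fin α → F, v ᵥ* (R + S * Z) = 0 → v = 0 :=
        fun hall => hne ((aux_rank_iff _).mpr hall)
      push_neg at h2
      obtain ⟨v, hv1, hv2⟩ := h2
      exact ⟨v, hv2, hv1⟩
    set w : Ω → (Fin α → F) := fun Z =>
      if h : ∃ v : Fin α → F, v ≠ 0 ∧ v ᵥ* (R + S * Z) = 0 then h.choose else 0 with hw
    have hwprop : ∀ Z ∈ bad, w Z ≠ 0 ∧ (w Z) ᵥ* (R + S * Z) = 0 := by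
      intro Z hZ
      have h := hwit Z hZ
      simp only [hw, dif_pos h]
      exact h.choose_spec
    have hcards : (bad ×ˢ (Finset.univ.erase (0 : F))).card = bad.card * (q - 1) := by
      rw [Finset.card_product, Finset.card_erase_of_mem (Finset.mem_univ _),
        Finset.card_univ]
    rw [← hcards]
    apply Finset.card_le_card_of_injOn
      (fun p => (⟨p.2 • w p.1, p.1⟩ : Σ _v : Fin α → F, Ω))
    · rintro ⟨Z, c⟩ hp
      simp only [Finset.mem_coe] at hp ⊢
      rw [Finset.mem_product] at hp
      obtain ⟨hZ, hc⟩ := hp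
      have hc0 : c ≠ 0 := (Finset.mem_erase.mp hc).1
      obtain ⟨hwne, hwz⟩ := hwprop Z hZ
      rw [Finset.mem_sigma]
      constructor
      · exact Finset.mem_erase.mpr ⟨smul_ne_zero hc0 hwne, Finset.mem_univ _⟩
      · rw [hA]
        apply Finset.mem_filter.mpr
        refine ⟨Finset.mem_univ _, ?_⟩
        show (c • w Z) ᵥ* (R + S * Z) = 0
        rw [Matrix.smul_vecMul, hwz, smul_zero]
    · rintro ⟨Z, c⟩ hp ⟨Z', c'⟩ hp' heq
      simp only [Finset.coe_product, Set.mem_prod, Finset.mem_coe] at hp hp'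
      obtain ⟨hZ, hc⟩ := hp
      obtain ⟨hZ', hc'⟩ := hp'
      have h2 : Z = Z' := congrArg (fun x : (Σ _v : Fin α → F, Ω) => x.2) heq
      subst h2
      have h1 : c • w Z = c' • w Z :=
        congrArg (fun x : (Σ _v : Fin α → F, Ω) => x.1) heq
      obtain ⟨hwne, -⟩ := hwprop Z hZ
      obtain ⟨i, hi⟩ := Function.ne_iff.mp hwne
      have : c * w Z i = c' * w Z i := congrFun h1 i
      have : c = c' := mul_right_cancel₀ hi this
      simp [this]
  -- total bound
  have hnzvcard : nzv.card = q ^ α - 1 := by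
    rw [hnzv, Finset.card_erase_of_mem (Finset.mem_univ _), Finset.card_univ]
    simp [hq]
  have hkey : bad.card * (q - 1) * q ^ β < q ^ α * N := by
    calc bad.card * (q - 1) * q ^ β ≤ (∑ v ∈ nzv, (A v).card) * q ^ β :=
          Nat.mul_le_mul_right _ hub
      _ = ∑ v ∈ nzv, (A v).card * q ^ β := by rw [Finset.sum_mul]
      _ ≤ ∑ _v ∈ nzv, N := Finset.sum_le_sum hper
      _ = (q ^ α - 1) * N := by rw [Finset.sum_const, smul_eq_mul, hnzvcard]
      _ < q ^ α * N := by
          have h1 : 1 ≤ q ^ α := Nat.one_le_pow _ _ (by omega)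
          exact (Nat.mul_lt_mul_right hNpos).mpr (by omega)
  -- translate to the goal
  have hgood : Nat.card {Z : Ω // (R + S * Z).rank = α}
      = N - bad.card := by
    rw [Nat.card_eq_fintype_card, Fintype.card_subtype]
    have : Finset.univ.filter (fun Z : Ω => (R + S * Z).rank = α)
        = Finset.univ \ bad := by
      rw [hbad, Finset.sdiff_eq_filter]
      apply Finset.filter_congr
      intro Z _
      simp
    rw [this, Finset.card_sdiff, Finset.inter_univ, Finset.card_univ]
  have hbadle : bad.card ≤ N := le_trans (Finset.card_filter_le _ _) (le_of_eq Finset.card_univ)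
  have hNcard : Nat.card Ω = N := Nat.card_eq_fintype_card
  rw [hgood, hNcard]
  -- now pure arithmetic in ℚ
  have hqQ : (2 : ℚ) ≤ (q : ℚ) := by exact_mod_cast hq2
  have hq1 : (0 : ℚ) < (q : ℚ) - 1 := by linarith
  have hqb : (0 : ℚ) < (q : ℚ) ^ β := by positivity
  have hNQ : (0 : ℚ) < (N : ℚ) := by exact_mod_cast hNpos
  have hkeyQ : (bad.card : ℚ) * ((q : ℚ) ^ β * ((q : ℚ) - 1)) < (q : ℚ) ^ α * (N : ℚ) := by
    have := hkey
    have h' : ((bad.card * (q - 1) * q ^ β : ℕ) : ℚ) < ((q ^ α * N : ℕ) : ℚ) := by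
      exact_mod_cast this
    push_cast at h'
    have hc : (1 : ℚ) ≤ (q : ℚ) := by linarith
    rw [Nat.cast_sub (by omega : 1 ≤ q)] at h'
    push_cast at h'
    linarith [h']
  have hsub : ((N - bad.card : ℕ) : ℚ) = (N : ℚ) - (bad.card : ℚ) := by
    rw [Nat.cast_sub hbadle]
  rw [hsub]
  rw [sub_div, div_self (ne_of_gt hNQ)]
  have hlt : (bad.card : ℚ) / (N : ℚ) < (q : ℚ) ^ α / ((q : ℚ) ^ β * ((q : ℚ) - 1)) := by
    rw [div_lt_div_iff₀ hNQ (by positivity)]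
    exact hkeyQ
  linarith
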